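/- Let {f_i}_{i=1}^{d+1} ⊂ R^d be a simplex ETF with ⟨f_i, f_j⟩ = -1/d for i ≠ j, and let B = {B_i}_{i=1}^{b} be a (d+1, k, λ) block design on {1, ..., d+1} with 2 ≤ k ≤ d. Define g_i = (Σ_{j∈B_i} f_j)/||Σ_{j∈B_i} f_j||. Then {g_i}_{i=1}^{b} is a unit norm tight frame for R^d, i.e., Σ_{i=1}^{b} |⟨f, g_i⟩|^2 = (b/d)||f||^2 for all f ∈ R^d. -/

import Mathlib

open Finset

private lemma bd_point_count (d b k lam : ℕ) (B : Fin b → Finset (Fin (d + 1)))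
    (hBcard : ∀ i, (B i).card = k)
    (hpair : ∀ x y : Fin (d + 1), x ≠ y →
      (Finset.univ.filter (fun i => x ∈ B i ∧ y ∈ B i)).card = lam)
    (j : Fin (d+1)) :
    (k - 1) * (Finset.univ.filter (fun i => j ∈ B i)).card = lam * d := by
  have key : ∑ y ∈ Finset.univ.erase j,
      (Finset.univ.filter (fun i => j ∈ B i ∧ y ∈ B i)).card = lam * d := by
    rw [Finset.sum_congr rfl (fun y hy => hpair j y (fun h => (Finset.mem_erase.mp hy).1 h.symm))]
    simp [Finset.card_erase_of_mem, mul_comm]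
  rw [← key]
  have h1 : ∀ y : Fin (d+1), (Finset.univ.filter (fun i => j ∈ B i ∧ y ∈ B i)).card
      = ∑ i : Fin b, if j ∈ B i ∧ y ∈ B i then 1 else 0 := by
    intro y; rw [Finset.card_filter]
  simp only [h1]
  rw [Finset.sum_comm]
  have h2 : ∀ i : Fin b, ∑ y ∈ Finset.univ.erase j, (if j ∈ B i ∧ y ∈ B i then 1 else 0)
      = if j ∈ B i then k - 1 else 0 := by
    intro i
    by_cases hj : j ∈ B i
    · rw [if_pos hj]
      have : ∀ y, (j ∈ B i ∧ y ∈ B i) = (y ∈ B i) := by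
        intro y; simp [hj]
      simp only [this]
      rw [Finset.sum_ite_mem, Finset.sum_const]
      have : (Finset.univ.erase j) ∩ B i = (B i).erase j := by
        ext y; simp [Finset.mem_erase, and_comm]
      rw [this, Finset.card_erase_of_mem hj, hBcard i]
      simp
    · simp [hj]
  simp only [h2]
  rw [Finset.sum_ite, Finset.sum_const, Finset.sum_const_zero]
  simp [mul_comm]

private lemma bd_block_count (d b k lam : ℕ) (B : Fin b → Finset (Fin (d + 1)))
    (hBcard : ∀ i, (B i).card = k)
    (hr : ∀ j, (k - 1) * (Finset.univ.filter (fun i => j ∈ B i)).card = lam * d) :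
    b * (k * (k-1)) = lam * ((d+1) * d) := by
  have hcard : ∀ i, (B i).card = ∑ j : Fin (d+1), if j ∈ B i then 1 else 0 := by
    intro i; rw [Finset.sum_ite_mem, Finset.univ_inter, Finset.sum_const]; simp
  have h1 : ∑ i : Fin b, (B i).card
      = ∑ j : Fin (d+1), (Finset.univ.filter (fun i => j ∈ B i)).card := by
    rw [Finset.sum_congr rfl (fun i _ => hcard i), Finset.sum_comm]
    exact Finset.sum_congr rfl (fun j _ => (Finset.card_filter _ _).symm)
  have h2 : ∑ i : Fin b, (B i).card = b * k := by simp [hBcard, Finset.sum_const, mul_comm]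
  calc b * (k * (k-1)) = (k-1) * (b * k) := by ring
    _ = ∑ j : Fin (d+1), (k-1) * (Finset.univ.filter (fun i => j ∈ B i)).card := by
        rw [← h2, h1, Finset.mul_sum]
    _ = ∑ j : Fin (d+1), lam * d := by simp [hr]
    _ = lam * ((d+1)*d) := by simp [Finset.sum_const]; ring

private lemma bd_block_inner (d : ℕ) (hd : 0 < d) (f : Fin (d + 1) → EuclideanSpace ℝ (Fin d))
    (hff : ∀ i j, (inner ℝ (f i) (f j) : ℝ) = if i = j then 1 else -1/(d:ℝ))
    (s : Finset (Fin (d+1))) :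
    (inner ℝ (∑ j ∈ s, f j) (∑ j' ∈ s, f j') : ℝ)
      = s.card * (1 + ((s.card : ℝ) - 1) * (-1/d)) := by
  rw [sum_inner]
  have inner_row : ∀ j ∈ s, (inner ℝ (f j) (∑ j' ∈ s, f j') : ℝ)
      = 1 + ((s.card : ℝ) - 1) * (-1/d) := by
    intro j hj
    rw [inner_sum]
    simp only [hff]
    rw [← Finset.add_sum_erase s _ hj]
    simp only [if_pos rfl]
    rw [Finset.sum_ite_of_false (fun x hx => fun h => (Finset.mem_erase.mp hx).1 h.symm)]
    rw [Finset.sum_const, Finset.card_erase_of_mem hj, nsmul_eq_mul]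
    push_cast [Nat.cast_sub (Nat.one_le_iff_ne_zero.mpr (Finset.card_ne_zero_of_mem hj))]
    ring
  rw [Finset.sum_congr rfl inner_row, Finset.sum_const, nsmul_eq_mul]

private lemma bd_sum_zero (d : ℕ) (hd : 0 < d) (f : Fin (d + 1) → EuclideanSpace ℝ (Fin d))
    (hff : ∀ i j, (inner ℝ (f i) (f j) : ℝ) = if i = j then 1 else -1/(d:ℝ)) :
    ∑ i, f i = 0 := by
  have hdR : (d:ℝ) ≠ 0 := Nat.cast_ne_zero.mpr hd.ne'
  have h0 : (inner ℝ (∑ i, f i) (∑ i, f i) : ℝ) = 0 := by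
    rw [bd_block_inner d hd f hff Finset.univ]
    simp only [Finset.card_univ, Fintype.card_fin]
    push_cast
    field_simp
    ring
  exact inner_self_eq_zero.mp h0

private lemma bd_frame (d : ℕ) (hd : 0 < d) (f : Fin (d + 1) → EuclideanSpace ℝ (Fin d))
    (hff : ∀ i j, (inner ℝ (f i) (f j) : ℝ) = if i = j then 1 else -1/(d:ℝ))
    (hsum0 : ∑ i, f i = 0) :
    ∀ x : EuclideanSpace ℝ (Fin d),
      ∑ i, (inner ℝ x (f i) : ℝ)^2 = ((d:ℝ)+1)/d * ‖x‖^2 := by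
  have hdR : (d:ℝ) ≠ 0 := Nat.cast_ne_zero.mpr hd.ne'
  have hdpos : (0:ℝ) < d := by exact_mod_cast hd
  haveI : Nonempty (Fin d) := ⟨⟨0, hd⟩⟩
  -- linear independence of the first d vectors
  have li : LinearIndependent ℝ (fun j : Fin d => f j.castSucc) := by
    rw [Fintype.linearIndependent_iff]
    intro c hc
    have key : ∀ j₀ : Fin d, c j₀ * (1 + 1/(d:ℝ)) = (1/d) * ∑ j, c j := by
      intro j₀
      have h0 : (inner ℝ (f j₀.castSucc) (∑ j : Fin d, c j • f j.castSucc) : ℝ) = 0 := by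
        rw [hc]; simp
      rw [inner_sum] at h0
      simp only [real_inner_smul_right, hff] at h0
      have hrow : ∀ j : Fin d, c j * (if j₀.castSucc = j.castSucc then (1:ℝ) else -1/d)
          = c j * (-1/d) + (if j₀ = j then c j * (1 + 1/d) else 0) := by
        intro j; by_cases h : j₀ = j
        · simp [h]; ring
        · simp [h, fun hcs => h (Fin.castSucc_injective d hcs)]
      rw [Finset.sum_congr rfl (fun j _ => hrow j), Finset.sum_add_distrib,
        Finset.sum_ite_eq, if_pos (Finset.mem_univ j₀), ← Finset.sum_mul] at h0
      linear_combination h0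
    have hT : (∑ j, c j) = 0 := by
      have h1 : ∑ j₀ : Fin d, c j₀ * (1 + 1/(d:ℝ)) = ∑ j₀ : Fin d, (1/d) * ∑ j, c j :=
        Finset.sum_congr rfl (fun j₀ _ => key j₀)
      rw [← Finset.sum_mul, Finset.sum_const] at h1
      simp only [Finset.card_univ, Fintype.card_fin, nsmul_eq_mul] at h1
      have hdd : (d:ℝ) * (1/d) = 1 := by field_simp
      have h2 : (∑ j, c j) * (1/(d:ℝ)) = 0 := by
        linear_combination h1 + (∑ j, c j) * hdd
      exact (mul_eq_zero.mp h2).resolve_right (one_div_ne_zero hdR)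
    intro j₀
    have hkey := key j₀
    rw [hT] at hkey
    simp only [mul_zero] at hkey
    have hpos : (0:ℝ) < 1 + 1/d := by positivity
    rcases mul_eq_zero.mp hkey with h | h
    · exact h
    · exact absurd h hpos.ne'
  -- the first d vectors form a basis, so they span
  have hcardeq : Fintype.card (Fin d) = Module.finrank ℝ (EuclideanSpace ℝ (Fin d)) := by
    rw [Fintype.card_fin, finrank_euclideanSpace_fin]
  have hspan : Submodule.span ℝ (Set.range f) = ⊤ := by
    have hsp : Submodule.span ℝ (Set.range (fun j : Fin d => f j.castSucc)) = ⊤ := by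
      rw [← coe_basisOfLinearIndependentOfCardEqFinrank li hcardeq]
      exact Module.Basis.span_eq _
    apply top_unique
    rw [← hsp]
    apply Submodule.span_mono
    rintro _ ⟨j, rfl⟩
    exact ⟨j.castSucc, rfl⟩
  -- frame operator identity
  intro x
  have hsumfx : ∑ i, (inner ℝ x (f i) : ℝ) = 0 := by
    rw [← inner_sum, hsum0, inner_zero_right]
  have hrepr : ∑ i, (inner ℝ x (f i) : ℝ) • f i = (1 + 1/(d:ℝ)) • x := by
    set y : EuclideanSpace ℝ (Fin d) := ∑ i, (inner ℝ x (f i) : ℝ) • f i - (1 + 1/(d:ℝ)) • x with hy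
    have horth : ∀ i₀ : Fin (d+1), (inner ℝ (f i₀) y : ℝ) = 0 := by
      intro i₀
      rw [hy, inner_sub_right, inner_sum, real_inner_smul_right]
      simp only [real_inner_smul_right]
      have hrow : ∀ i : Fin (d+1), (inner ℝ x (f i) : ℝ) * (inner ℝ (f i₀) (f i) : ℝ)
          = (inner ℝ x (f i) : ℝ) * (-1/d)
            + (if i₀ = i then (inner ℝ x (f i) : ℝ) * (1 + 1/d) else 0) := by
        intro i; rw [hff]; by_cases h : i₀ = i
        · simp [h]; ring
        · simp [h]
      rw [Finset.sum_congr rfl (fun i _ => hrow i), Finset.sum_add_distrib,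
        Finset.sum_ite_eq, if_pos (Finset.mem_univ i₀), ← Finset.sum_mul, hsumfx,
        real_inner_comm (f i₀) x]
      ring
    have horthspan : ∀ v ∈ Submodule.span ℝ (Set.range f), (inner ℝ v y : ℝ) = 0 := by
      intro v hv
      induction hv using Submodule.span_induction with
      | mem v hv => rcases hv with ⟨i, rfl⟩; exact horth i
      | zero => simp
      | add v w _ _ hv hw => rw [inner_add_left, hv, hw]; ring
      | smul a v _ hv => rw [real_inner_smul_left, hv]; ring
    have hyy : (inner ℝ y y : ℝ) = 0 := horthspan y (by rw [hspan]; trivial)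
    exact sub_eq_zero.mp (inner_self_eq_zero.mp hyy)
  have h3 : (inner ℝ x (∑ i, (inner ℝ x (f i):ℝ) • f i) : ℝ) = (1 + 1/(d:ℝ)) * ‖x‖^2 := by
    rw [hrepr, real_inner_smul_right, real_inner_self_eq_norm_sq]
  rw [inner_sum] at h3
  simp only [real_inner_smul_right] at h3
  have : ∑ i, (inner ℝ x (f i) : ℝ)^2 = (1 + 1/(d:ℝ)) * ‖x‖^2 := by
    rw [← h3]; exact Finset.sum_congr rfl (fun i _ => by rw [sq])
  rw [this]; field_simp

/-- Normalized block sums of a simplex ETF over a `(d+1, k, λ)` block design form a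
unit norm tight frame of `b` vectors for `ℝ^d`. -/
theorem block_design_untf (d b k lam : ℕ) (hd : 0 < d) (hk : 2 ≤ k) (hkd : k ≤ d)
    (hlam : 0 < lam)
    (f : Fin (d + 1) → EuclideanSpace ℝ (Fin d))
    (hnorm : ∀ i, ‖f i‖ = 1)
    (hangle : ∀ i j, i ≠ j → (inner ℝ (f i) (f j) : ℝ) = -1 / d)
    (B : Fin b → Finset (Fin (d + 1)))
    (hBcard : ∀ i, (B i).card = k)
    (hpair : ∀ x y : Fin (d + 1), x ≠ y →
      (Finset.univ.filter (fun i => x ∈ B i ∧ y ∈ B i)).card = lam)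
    (g : Fin b → EuclideanSpace ℝ (Fin d))
    (hg : ∀ i, g i = ‖∑ j ∈ B i, f j‖⁻¹ • ∑ j ∈ B i, f j) :
    (∀ i, ‖g i‖ = 1) ∧
    ∀ x : EuclideanSpace ℝ (Fin d),
      ∑ i : Fin b, |(inner ℝ x (g i) : ℝ)| ^ 2 = ((b : ℝ) / d) * ‖x‖ ^ 2 := by
  have hdR : (d:ℝ) ≠ 0 := Nat.cast_ne_zero.mpr hd.ne'
  have hdpos : (0:ℝ) < d := by exact_mod_cast hd
  have hkR : (1:ℝ) ≤ (k:ℝ) - 1 := by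
    have : (2:ℝ) ≤ k := by exact_mod_cast hk
    linarith
  have hkdR : (k:ℝ) ≤ d := by exact_mod_cast hkd
  have hff : ∀ i j, (inner ℝ (f i) (f j) : ℝ) = if i = j then 1 else -1/(d:ℝ) := by
    intro i j
    by_cases h : i = j
    · subst h
      rw [if_pos rfl, real_inner_self_eq_norm_sq, hnorm i, one_pow]
    · rw [if_neg h, hangle i j h]
  have hsum0 : ∑ i, f i = 0 := bd_sum_zero d hd f hff
  have hframe := bd_frame d hd f hff hsum0
  -- constant C = squared norm of each block sum
  set C : ℝ := (k:ℝ) * (1 + ((k:ℝ) - 1) * (-1/d)) with hC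
  have hkne : (k:ℝ) - 1 ≠ 0 := by linarith
  have hkne0 : (k:ℝ) ≠ 0 := by linarith
  have hCval : C = (k:ℝ) * ((d:ℝ) - k + 1) / d := by
    have hinv : (d:ℝ) * (1/d) = 1 := by field_simp
    rw [hC, eq_div_iff hdR]
    linear_combination ((k:ℝ) - (k:ℝ)^2) * hinv
  have hCpos : 0 < C := by
    rw [hCval]
    apply div_pos _ hdpos
    have : (0:ℝ) < (k:ℝ) := by linarith
    nlinarith
  have hSnorm : ∀ i : Fin b, ‖∑ j ∈ B i, f j‖^2 = C := by
    intro i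
    rw [← real_inner_self_eq_norm_sq, bd_block_inner d hd f hff (B i), hBcard i, hC]
  have hSne : ∀ i : Fin b, ‖∑ j ∈ B i, f j‖ ≠ 0 := by
    intro i h
    have h2 := hSnorm i
    rw [h] at h2
    norm_num at h2
    rw [← h2] at hCpos
    exact lt_irrefl _ hCpos
  constructor
  · intro i
    rw [hg i, norm_smul, norm_inv, norm_norm, inv_mul_cancel₀ (hSne i)]
  · intro x
    set a : Fin (d+1) → ℝ := fun j => (inner ℝ x (f j) : ℝ) with ha
    have hsumax : ∑ j, a j = 0 := by
      rw [ha]; simp only; rw [← inner_sum, hsum0, inner_zero_right]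
    -- each term
    have hterm : ∀ i : Fin b, |(inner ℝ x (g i) : ℝ)| ^ 2 = C⁻¹ * (∑ j ∈ B i, a j)^2 := by
      intro i
      rw [hg i, real_inner_smul_right, sq_abs, mul_pow, inv_pow, hSnorm i, inner_sum]
    simp only [hterm]
    rw [← Finset.mul_sum]
    -- the double count
    set r : Fin (d+1) → ℕ := fun j => (Finset.univ.filter (fun i => j ∈ B i)).card with hr
    have hrcount : ∀ j, (k - 1) * r j = lam * d := fun j => bd_point_count d b k lam B hBcard hpair j
    have hrR : ∀ j, ((k:ℝ) - 1) * (r j : ℝ) = (lam : ℝ) * d := by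
      intro j
      have := hrcount j
      have h2 : ((k-1 : ℕ) : ℝ) * (r j : ℝ) = (lam:ℝ) * d := by exact_mod_cast this
      rwa [Nat.cast_sub (by omega), Nat.cast_one] at h2
    have hbcount : b * (k * (k-1)) = lam * ((d+1) * d) :=
      bd_block_count d b k lam B hBcard hrcount
    have hbR : (b:ℝ) * ((k:ℝ) * ((k:ℝ)-1)) = (lam:ℝ) * (((d:ℝ)+1) * d) := by
      have : ((b * (k * (k-1)) : ℕ) : ℝ) = ((lam * ((d+1) * d) : ℕ) : ℝ) := by
        exact_mod_cast congrArg (Nat.cast : ℕ → ℝ) hbcount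
      push_cast [Nat.cast_sub (by omega : 1 ≤ k)] at this
      linarith [this]
    -- expand the sum of squares of block sums
    have hsq : ∀ i : Fin b, (∑ j ∈ B i, a j)^2
        = ∑ j : Fin (d+1), ∑ j' : Fin (d+1),
            (if j ∈ B i then a j else 0) * (if j' ∈ B i then a j' else 0) := by
      intro i
      rw [← Finset.sum_mul_sum, ← sq]
      congr 1
      rw [Finset.sum_ite_mem, Finset.univ_inter]
    rw [Finset.sum_congr rfl (fun i _ => hsq i), Finset.sum_comm]
    have hswap : ∀ j : Fin (d+1), ∑ i : Fin b, ∑ j' : Fin (d+1),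
          (if j ∈ B i then a j else 0) * (if j' ∈ B i then a j' else 0)
        = ∑ j' : Fin (d+1), ∑ i : Fin b,
          (if j ∈ B i then a j else 0) * (if j' ∈ B i then a j' else 0) :=
      fun j => Finset.sum_comm
    rw [Finset.sum_congr rfl (fun j _ => hswap j)]
    have hN : ∀ j j' : Fin (d+1), ∑ i : Fin b,
          (if j ∈ B i then a j else 0) * (if j' ∈ B i then a j' else 0)
        = a j * a j' *
          ((Finset.univ.filter (fun i => j ∈ B i ∧ j' ∈ B i)).card : ℝ) := by
      intro j j'
      rw [Finset.card_filter]
      push_cast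
      rw [Finset.mul_sum]
      apply Finset.sum_congr rfl
      intro i _
      by_cases h1 : j ∈ B i <;> by_cases h2 : j' ∈ B i <;> simp [h1, h2]
    rw [Finset.sum_congr rfl (fun j _ => Finset.sum_congr rfl (fun j' _ => hN j j'))]
    -- split the diagonal
    have hNval : ∀ j j' : Fin (d+1),
        ((Finset.univ.filter (fun i => j ∈ B i ∧ j' ∈ B i)).card : ℝ)
        = (lam : ℝ) + (if j = j' then (r j : ℝ) - lam else 0) := by
      intro j j'
      by_cases h : j = j'
      · subst h
        rw [if_pos rfl]
        have : (Finset.univ.filter (fun i => j ∈ B i ∧ j ∈ B i)) =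
            (Finset.univ.filter (fun i => j ∈ B i)) := by
          apply Finset.filter_congr; intro i _; simp
        rw [this]
        ring
      · rw [if_neg h, hpair j j' h]
        ring
    have hsplit : ∀ j : Fin (d+1), ∑ j' : Fin (d+1), a j * a j' *
          ((Finset.univ.filter (fun i => j ∈ B i ∧ j' ∈ B i)).card : ℝ)
        = (lam : ℝ) * (a j * ∑ j', a j') + ((r j : ℝ) - lam) * (a j)^2 := by
      intro j
      rw [Finset.sum_congr rfl (fun j' _ => by rw [hNval j j'])]
      simp only [mul_add, Finset.sum_add_distrib]
      congr 1
      · rw [Finset.mul_sum, Finset.mul_sum]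
        apply Finset.sum_congr rfl
        intro j' _
        ring
      · have : ∀ j' : Fin (d+1), a j * a j' * (if j = j' then (r j : ℝ) - lam else 0)
            = (if j = j' then a j * a j' * ((r j : ℝ) - lam) else 0) := by
          intro j'
          by_cases h : j = j' <;> simp [h]
        rw [Finset.sum_congr rfl (fun j' _ => this j'), Finset.sum_ite_eq,
          if_pos (Finset.mem_univ j)]
        ring
    rw [Finset.sum_congr rfl (fun j _ => hsplit j)]
    rw [Finset.sum_add_distrib]
    have hzero : ∑ j : Fin (d+1), (lam : ℝ) * (a j * ∑ j', a j') = 0 := by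
      rw [Finset.sum_congr rfl (fun j _ => by rw [hsumax, mul_zero, mul_zero])]
      simp
    rw [hzero, zero_add]
    have hconst : ∀ j : Fin (d+1), ((r j : ℝ) - lam) * (a j)^2
        = ((lam : ℝ) * ((d:ℝ) - k + 1) / ((k:ℝ)-1)) * (a j)^2 := by
      intro j
      congr 1
      have h5 := hrR j
      rw [eq_div_iff hkne]
      linear_combination h5
    rw [Finset.sum_congr rfl (fun j _ => hconst j), ← Finset.mul_sum]
    have hsuma2 : ∑ j, (a j)^2 = ((d:ℝ)+1)/d * ‖x‖^2 := hframe x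
    rw [hsuma2]
    rw [hCval]
    have hdk : (d:ℝ) - k + 1 ≠ 0 := by linarith
    have hbval : (b:ℝ) = (lam:ℝ) * (((d:ℝ)+1)*d) / ((k:ℝ)*((k:ℝ)-1)) := by
      rw [eq_div_iff (mul_ne_zero hkne0 hkne)]
      linear_combination hbR
    rw [hbval]
    field_simp
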